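/- arXiv:1901.02974 — 2 statements merged into one kernel-verified Lean document; each statement's English description precedes it below -/
import Mathlib

section
/- The planar layer system du/dτ = v + u²/2, dv/dτ = -u has the first integral k(u,v) = -(u² + 2v - 2)e^v; that is, k is constant along every solution. -/
/-- The planar layer system `u' = v + u²/2`, `v' = -u` has the first integral
`k(u,v) = -(u² + 2v - 2)eᵛ`: it is constant along every solution. -/
theorem stmt_5 (u v : ℝ → ℝ)
    (hu : ∀ t, HasDerivAt u (v t + (u t) ^ 2 / 2) t)
    (hv : ∀ t, HasDerivAt v (-(u t)) t) :
    ∀ t, -(((u t) ^ 2 + 2 * v t - 2) * Real.exp (v t)) =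
      -(((u 0) ^ 2 + 2 * v 0 - 2) * Real.exp (v 0)) := by
  have key : ∀ t, HasDerivAt (fun t => -(((u t) ^ 2 + 2 * v t - 2) * Real.exp (v t))) 0 t := by
    intro t
    have h1 : HasDerivAt (fun t => (u t) ^ 2 + 2 * v t - 2)
        (2 * u t * (v t + (u t) ^ 2 / 2) + 2 * (-(u t))) t := by
      have := (((hu t).pow 2).add (((hv t).const_mul 2))).sub_const 2
      refine this.congr_deriv ?_
      ring
    have h2 : HasDerivAt (fun t => Real.exp (v t)) (Real.exp (v t) * (-(u t))) t :=
      (Real.hasDerivAt_exp (v t)).comp t (hv t)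
    have h3 := (h1.mul h2).neg
    refine h3.congr_deriv ?_
    ring
  intro t
  exact is_const_of_deriv_eq_zero (fun x => (key x).differentiableAt)
    (fun x => (key x).deriv) t 0
end

section
/- For the planar system du/dτ = v + u²/2, dv/dτ = -u, the level set {(u,v) : (u² + 2v - 2)e^v = -k} with 0 < k < 2 is a nonempty compact invariant set surrounding the unique equilibrium (0,0), and as k → 2⁻ the level sets shrink to the point (0,0); moreover on the level set k = 0, i.e. the parabola v = 1 - u²/2 (together with the region above it), solutions are unbounded. -/
lemma H_hasDeriv (u v : ℝ → ℝ) (t : ℝ)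
    (hu : HasDerivAt u (v t + (u t) ^ 2 / 2) t)
    (hv : HasDerivAt v (-(u t)) t) :
    HasDerivAt (fun s => ((u s) ^ 2 + 2 * v s - 2) * Real.exp (v s)) 0 t := by
  have h1 : HasDerivAt (fun s => (u s) ^ 2 + 2 * v s - 2)
      (2 * u t ^ 1 * (v t + (u t) ^ 2 / 2) + 2 * (-(u t))) t := by
    exact (((hu.pow 2).add ((hv.const_mul 2))).sub_const 2).congr_deriv (by push_cast; ring)
  have h2 : HasDerivAt (fun s => Real.exp (v s)) (Real.exp (v t) * (-(u t))) t := hv.exp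
  have h3 := h1.mul h2
  exact h3.congr_deriv (by ring)

lemma H_gt (u v : ℝ) (hp : ¬(u = 0 ∧ v = 0)) :
    -2 < (u ^ 2 + 2 * v - 2) * Real.exp v := by
  set s := v + u ^ 2 / 2 with hs
  have e1 : Real.exp (-s) * Real.exp s = 1 := by rw [← Real.exp_add]; simp
  have hv : Real.exp v = Real.exp s * Real.exp (-(u ^ 2 / 2)) := by
    rw [← Real.exp_add, hs]; ring_nf
  have hrw : (u ^ 2 + 2 * v - 2) * Real.exp v
      = ((2 * s - 2) * Real.exp s) * Real.exp (-(u ^ 2 / 2)) := by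
    rw [hv, hs]; ring
  rw [hrw]
  set X := (2 * s - 2) * Real.exp s with hX
  set E := Real.exp (-(u ^ 2 / 2)) with hE
  have hE0 : 0 < E := Real.exp_pos _
  have hXge : -2 ≤ X := by
    have key : (1 : ℝ) - s ≤ Real.exp (-s) := by
      have := Real.add_one_le_exp (-s); linarith
    nlinarith [mul_le_mul_of_nonneg_right key (Real.exp_pos s).le, e1]
  by_cases hu : u = 0
  · have hvne : v ≠ 0 := fun h => hp ⟨hu, h⟩
    have hsne : s ≠ 0 := by rw [hs, hu]; simpa using hvne
    have hE' : E = 1 := by rw [hE, hu]; simp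
    have key : (1 : ℝ) - s < Real.exp (-s) := by
      have := Real.add_one_lt_exp (neg_ne_zero.mpr hsne); linarith
    have : -2 < X := by
      nlinarith [mul_lt_mul_of_pos_right key (Real.exp_pos s), e1]
    rw [hE']; linarith
  · have hE1' : E < 1 := by
      rw [hE, Real.exp_lt_one_iff]
      have : 0 < u ^ 2 := by positivity
      linarith
    nlinarith [mul_nonneg (by linarith : (0:ℝ) ≤ X + 2) hE0.le]

lemma level_bound (k u v : ℝ) (hk0 : 0 < k)
    (h : (u ^ 2 + 2 * v - 2) * Real.exp v = -k) :
    |u| ≤ 2 + 2 * max 1 (16 / k) ∧ |v| ≤ max 1 (16 / k) := by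
  set B := max 1 (16 / k) with hB
  have hB1 : (1 : ℝ) ≤ B := le_max_left _ _
  have hBk : 16 ≤ k * B := by
    have : 16 / k ≤ B := le_max_right _ _
    calc (16:ℝ) = k * (16 / k) := by field_simp
    _ ≤ k * B := by nlinarith
  have e1 : Real.exp v * Real.exp (-v) = 1 := by rw [← Real.exp_add]; simp
  have h2 : u ^ 2 + 2 * v - 2 = -(k * Real.exp (-v)) := by
    linear_combination Real.exp (-v) * h - (u ^ 2 + 2 * v - 2) * e1
  have hvlb : -B ≤ v := by
    by_contra hc
    push_neg at hc
    set w := -v with hw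
    have hwB : B < w := by simp only [hw]; linarith
    have h1 : 1 + w / 2 ≤ Real.exp (w / 2) := by
      have := Real.add_one_le_exp (w / 2); linarith
    have hsq : Real.exp (-v) = Real.exp (w / 2) * Real.exp (w / 2) := by
      rw [← Real.exp_add, hw]; ring_nf
    have hw1 : 1 ≤ w := by linarith
    nlinarith [sq_nonneg u, h2, mul_pos hk0 (by linarith : (0:ℝ) < w),
      mul_le_mul h1 h1 (by linarith) (Real.exp_pos (w/2)).le,
      mul_le_mul_of_nonneg_left hwB.le hk0.le]
  have hexp : 0 < Real.exp (-v) := Real.exp_pos _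
  have hv1 : v < 1 := by nlinarith [sq_nonneg u, mul_pos hk0 hexp]
  have hu2 : u ^ 2 ≤ 2 + 2 * B := by nlinarith [mul_pos hk0 hexp]
  constructor
  · rw [abs_le]; constructor <;> nlinarith
  · rw [abs_le]; exact ⟨by linarith, by linarith⟩

/-- For the planar system `u' = v + u²/2`, `v' = -u` with first integral
`H(u,v) = (u² + 2v - 2)eᵛ`: for `0 < k < 2` the level set `{H = -k}` is a
nonempty compact invariant set not containing the unique equilibrium `(0,0)`;
the level sets shrink to the origin as `k → 2⁻`; and any globally defined
solution starting on or above the parabola `v = 1 - u²/2` (the level `k = 0`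
and the region above it) is unbounded. -/
theorem stmt_6 :
    (∀ p : ℝ × ℝ, (p.2 + p.1 ^ 2 / 2 = 0 ∧ -p.1 = 0) ↔ p = 0) ∧
    (∀ k ∈ Set.Ioo (0 : ℝ) 2,
      ({p : ℝ × ℝ | (p.1 ^ 2 + 2 * p.2 - 2) * Real.exp p.2 = -k}).Nonempty ∧
      IsCompact {p : ℝ × ℝ | (p.1 ^ 2 + 2 * p.2 - 2) * Real.exp p.2 = -k} ∧
      (0 : ℝ × ℝ) ∉ {p : ℝ × ℝ | (p.1 ^ 2 + 2 * p.2 - 2) * Real.exp p.2 = -k} ∧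
      (∀ u v : ℝ → ℝ,
        (∀ t, HasDerivAt u (v t + (u t) ^ 2 / 2) t) →
        (∀ t, HasDerivAt v (-(u t)) t) →
        ((u 0, v 0) ∈ {p : ℝ × ℝ | (p.1 ^ 2 + 2 * p.2 - 2) * Real.exp p.2 = -k}) →
        ∀ t, (u t, v t) ∈ {p : ℝ × ℝ | (p.1 ^ 2 + 2 * p.2 - 2) * Real.exp p.2 = -k})) ∧
    (∀ ε > (0 : ℝ), ∃ k0 ∈ Set.Ioo (0 : ℝ) 2, ∀ k ∈ Set.Ioo k0 2,
      {p : ℝ × ℝ | (p.1 ^ 2 + 2 * p.2 - 2) * Real.exp p.2 = -k} ⊆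
        Metric.ball (0 : ℝ × ℝ) ε) ∧
    (∀ u v : ℝ → ℝ,
      (∀ t ∈ Set.Ici (0 : ℝ), HasDerivAt u (v t + (u t) ^ 2 / 2) t) →
      (∀ t ∈ Set.Ici (0 : ℝ), HasDerivAt v (-(u t)) t) →
      1 - (u 0) ^ 2 / 2 ≤ v 0 →
      ¬ Bornology.IsBounded ((fun t => (u t, v t)) '' Set.Ici (0 : ℝ))) := by
  refine ⟨?_, ?_, ?_, ?_⟩
  -- Part 1: unique equilibrium
  · intro p
    constructor
    · rintro ⟨h1, h2⟩
      have hp1 : p.1 = 0 := by linarith [neg_eq_zero.mp h2]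
      have hp2 : p.2 = 0 := by rw [hp1] at h1; simpa using h1
      exact Prod.ext hp1 hp2
    · rintro rfl; norm_num
  -- Part 2
  · rintro k ⟨hk0, hk2⟩
    refine ⟨?_, ?_, ?_, ?_⟩
    -- nonempty
    · have hcont : ContinuousOn (fun v : ℝ => (2 * v - 2) * Real.exp v) (Set.Icc 0 1) := by
        fun_prop
      have hm : -k ∈ Set.Icc ((fun v : ℝ => (2 * v - 2) * Real.exp v) 0)
          ((fun v : ℝ => (2 * v - 2) * Real.exp v) 1) := by
        simp only [Set.mem_Icc]
        norm_num
        constructor <;> linarith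
      obtain ⟨w, _, hw⟩ := intermediate_value_Icc (by norm_num : (0:ℝ) ≤ 1) hcont hm
      exact ⟨(0, w), by show ((0:ℝ)^2 + 2 * w - 2) * Real.exp w = -k; linear_combination hw⟩
    -- compact
    · rw [Metric.isCompact_iff_isClosed_bounded]
      constructor
      · exact isClosed_eq (by fun_prop) (by fun_prop)
      · rw [isBounded_iff_forall_norm_le]
        refine ⟨2 + 2 * max 1 (16 / k), fun p hp => ?_⟩
        obtain ⟨h1, h2⟩ := level_bound k p.1 p.2 hk0 hp
        have hB1 : (1:ℝ) ≤ max 1 (16 / k) := le_max_left _ _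
        rw [Prod.norm_def]
        apply max_le <;> rw [Real.norm_eq_abs] <;> linarith
    -- origin not on level set
    · intro hmem
      simp only [Set.mem_setOf_eq, Prod.fst_zero, Prod.snd_zero] at hmem
      norm_num at hmem
      linarith
    -- invariance
    · intro u v hu hv h0 t
      have hconst : ((u t) ^ 2 + 2 * v t - 2) * Real.exp (v t)
          = ((u 0) ^ 2 + 2 * v 0 - 2) * Real.exp (v 0) := by
        exact is_const_of_deriv_eq_zero
          (fun x => (H_hasDeriv u v x (hu x) (hv x)).differentiableAt)
          (fun x => (H_hasDeriv u v x (hu x) (hv x)).deriv) t 0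
      show ((u t) ^ 2 + 2 * v t - 2) * Real.exp (v t) = -k
      exact hconst.trans h0
  -- Part 3: shrinking to origin
  · intro ε hε
    set H : ℝ × ℝ → ℝ := fun p => (p.1 ^ 2 + 2 * p.2 - 2) * Real.exp p.2 with hH
    have hsub : ∀ k : ℝ, 1 < k → ∀ p : ℝ × ℝ, H p = -k →
        p ∈ Metric.closedBall (0 : ℝ × ℝ) 34 := by
      intro k hk p hp
      obtain ⟨h1, h2⟩ := level_bound k p.1 p.2 (by linarith) hp
      have hB : max 1 (16 / k) ≤ 16 := by
        apply max_le (by norm_num)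
        rw [div_le_iff₀ (by linarith)]
        nlinarith
      rw [Metric.mem_closedBall, dist_zero_right, Prod.norm_def]
      apply max_le <;> rw [Real.norm_eq_abs] <;> linarith
    set K := Metric.closedBall (0 : ℝ × ℝ) 34 \ Metric.ball 0 ε with hKdef
    have hKc : IsCompact K := (isCompact_closedBall _ _).diff Metric.isOpen_ball
    by_cases hKn : K.Nonempty
    · obtain ⟨q, hqK, hqmin⟩ := hKc.exists_isMinOn hKn (by fun_prop : ContinuousOn H K)
      have hq0 : ¬(q.1 = 0 ∧ q.2 = 0) := by
        rintro ⟨h1, h2⟩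
        have hq : q = 0 := Prod.ext h1 h2
        have : q ∉ Metric.ball (0 : ℝ × ℝ) ε := hqK.2
        apply this
        rw [hq, Metric.mem_ball, dist_self]
        exact hε
      have hm : -2 < H q := H_gt q.1 q.2 hq0
      refine ⟨max 1 (-H q), ⟨lt_of_lt_of_le one_pos (le_max_left _ _),
        max_lt one_lt_two (by linarith)⟩, ?_⟩
      intro k hk p hp
      have hk1 : 1 < k := lt_of_le_of_lt (le_max_left _ _) hk.1
      have hpball := hsub k hk1 p hp
      by_contra hout
      have hpK : p ∈ K := ⟨hpball, hout⟩
      have h5 : H q ≤ H p := hqmin hpK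
      have h7 : -(max 1 (-H q)) ≤ H q := by
        have := le_max_right 1 (-H q); linarith
      have hp' : H p = -k := hp
      have := hk.1
      linarith
    · refine ⟨1, ⟨one_pos, one_lt_two⟩, fun k hk p hp => ?_⟩
      by_contra hout
      exact hKn ⟨p, hsub k hk.1 p hp, hout⟩
  -- Part 4: unboundedness above the parabola
  · intro u v hu hv h0 hbdd
    rw [isBounded_iff_forall_norm_le] at hbdd
    obtain ⟨C, hC⟩ := hbdd
    set h : ℝ → ℝ := fun t => ((u t) ^ 2 + 2 * v t - 2) * Real.exp (v t) with hh
    have hcons : ∀ t ∈ Set.Ici (0 : ℝ), h t = h 0 := by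
      intro t ht
      have key := constant_of_has_deriv_right_zero (f := h) (a := 0) (b := t)
        (fun x hx => (H_hasDeriv u v x (hu x hx.1) (hv x hx.1)).continuousAt.continuousWithinAt)
        (fun x hx => (H_hasDeriv u v x (hu x hx.1) (hv x hx.1)).hasDerivWithinAt)
      exact key t ⟨ht, le_refl t⟩
    have h00 : 0 ≤ h 0 := by
      have h1 : 0 ≤ (u 0) ^ 2 + 2 * v 0 - 2 := by nlinarith
      exact mul_nonneg h1 (Real.exp_pos _).le
    have hkey : ∀ t ∈ Set.Ici (0 : ℝ), 1 ≤ v t + (u t) ^ 2 / 2 := by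
      intro t ht
      have h2 := hcons t ht
      have h1 : 0 ≤ (u t) ^ 2 + 2 * v t - 2 := by
        by_contra hc
        push_neg at hc
        have : h t < 0 := mul_neg_of_neg_of_pos hc (Real.exp_pos _)
        linarith
      linarith
    set g : ℝ → ℝ := fun t => u t - t with hg
    have hgd : ∀ t ∈ Set.Ici (0 : ℝ), HasDerivAt g (v t + (u t) ^ 2 / 2 - 1) t :=
      fun t ht => (hu t ht).sub (hasDerivAt_id t)
    have hmono : MonotoneOn g (Set.Ici 0) := by
      apply monotoneOn_of_deriv_nonneg (convex_Ici 0)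
      · exact fun t ht => (hgd t ht).continuousAt.continuousWithinAt
      · intro t ht
        rw [interior_Ici] at ht
        exact (hgd t (Set.mem_Ici.mpr (le_of_lt (Set.mem_Ioi.mp ht)))).differentiableAt.differentiableWithinAt
      · intro t ht
        rw [interior_Ici] at ht
        rw [(hgd t (Set.mem_Ici.mpr (le_of_lt (Set.mem_Ioi.mp ht)))).deriv]
        linarith [hkey t (Set.mem_Ici.mpr (le_of_lt (Set.mem_Ioi.mp ht)))]
    set T := max 0 (C + 1 - u 0) with hT
    have hT0 : (0 : ℝ) ≤ T := le_max_left _ _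
    have hgm : g 0 ≤ g T := hmono (Set.mem_Ici.mpr le_rfl) (Set.mem_Ici.mpr hT0) hT0
    have hut : C + 1 ≤ u T := by
      have h1 : u 0 - 0 ≤ u T - T := hgm
      have h2 : C + 1 - u 0 ≤ T := le_max_right _ _
      linarith
    have hnorm := hC (u T, v T) ⟨T, Set.mem_Ici.mpr hT0, rfl⟩
    have hfst : ‖u T‖ ≤ ‖(u T, v T)‖ := norm_fst_le (u T, v T)
    rw [Real.norm_eq_abs] at hfst
    linarith [le_abs_self (u T)]
end
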